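/- If G is a k-connected graph on s vertices (k ≥ 1), then the diameter of G is at most ⌊(s-2)/k⌋ + 1. -/

import Mathlib

/-- A graph is `k`-connected if it has at least `k+1` vertices and (by Menger's theorem)
it cannot be disconnected by removing fewer than `k` vertices. -/
def IsKConnected {V : Type*} [Fintype V] (G : SimpleGraph V) (k : ℕ) : Prop :=
  k + 1 ≤ Fintype.card V ∧
    ∀ s : Finset V, s.card < k → ((⊤ : G.Subgraph).deleteVerts ↑s).coe.Connected

open SimpleGraph

lemma walk_ivt {V : Type*} (G : SimpleGraph V) (hG : G.Connected) (u : V) (i : ℕ) :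
    ∀ {a b : V} (w : G.Walk a b), G.dist u a ≤ i → i ≤ G.dist u b →
      ∃ x ∈ w.support, G.dist u x = i := by
  intro a b w
  induction w with
  | nil => exact fun h1 h2 => ⟨_, by simp, le_antisymm h1 h2⟩
  | @cons a c b hadj w ih =>
    intro h1 h2
    by_cases he : G.dist u a = i
    · exact ⟨a, by simp, he⟩
    · have h1' : G.dist u a + 1 ≤ i := lt_of_le_of_ne h1 he
      have hac : G.dist a c = 1 := dist_eq_one_iff_adj.mpr hadj
      have htri : G.dist u c ≤ G.dist u a + G.dist a c := hG.dist_triangle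
      have hc : G.dist u c ≤ i := le_trans (by rw [hac] at htri; exact htri) h1'
      obtain ⟨x, hx, hxd⟩ := ih hc h2
      exact ⟨x, by simp [hx], hxd⟩

theorem diam_le_of_isKConnected {V : Type*} [Fintype V] (G : SimpleGraph V) (k : ℕ)
    (hk : 1 ≤ k) (h : IsKConnected G k) :
    G.diam ≤ (Fintype.card V - 2) / k + 1 := by
  classical
  obtain ⟨hcard, hconn⟩ := h
  have hne : Nonempty V := Fintype.card_pos_iff.mp (by omega)
  have hG : G.Connected := by
    have := hconn ∅ (by simp; omega)
    rw [Finset.coe_empty, SimpleGraph.Subgraph.deleteVerts_empty] at this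
    exact ((Subgraph.topIso (G := G)).connected_iff).mp this
  obtain ⟨u, v, huv⟩ := G.exists_dist_eq_diam
  rw [← huv]
  set d := G.dist u v with hd
  by_cases hd1 : d ≤ 1
  · exact hd1.trans (Nat.le_add_left 1 _)
  push_neg at hd1
  set L : ℕ → Finset V := fun i => Finset.univ.filter (fun w => G.dist u w = i) with hL
  have hkey : ∀ i, 1 ≤ i → i ≤ d - 1 → k ≤ (L i).card := by
    intro i hi1 hi2
    by_contra hlt
    push_neg at hlt
    have hC := hconn (L i) hlt
    set C := ((⊤ : G.Subgraph).deleteVerts ↑(L i)) with hCdef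
    have huL : u ∉ (↑(L i) : Set V) := by
      simp only [hL, Finset.coe_filter, Set.mem_setOf_eq, Finset.mem_univ, true_and]
      rw [G.dist_self]; omega
    have hvL : v ∉ (↑(L i) : Set V) := by
      simp only [hL, Finset.coe_filter, Set.mem_setOf_eq, Finset.mem_univ, true_and]
      rw [← hd]; omega
    have hu' : u ∈ C.verts := ⟨trivial, huL⟩
    have hv' : v ∈ C.verts := ⟨trivial, hvL⟩
    obtain ⟨p⟩ := hC ⟨u, hu'⟩ ⟨v, hv'⟩
    set W := p.map C.hom with hW
    obtain ⟨x, hx, hxd⟩ := walk_ivt G hG u i W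
      (show G.dist u u ≤ i by rw [G.dist_self]; omega)
      (show i ≤ G.dist u v by rw [← hd]; omega)
    -- x avoids L i but has dist = i : contradiction
    rw [hW, SimpleGraph.Walk.support_map, List.mem_map] at hx
    obtain ⟨y, _, hyx⟩ := hx
    have : (y : V) ∉ (↑(L i) : Set V) := y.2.2
    apply this
    rw [show (y : V) = x from hyx]
    simp only [hL, Finset.coe_filter, Set.mem_setOf_eq, Finset.mem_univ, true_and]
    exact hxd
  -- counting
  have hdisj : ∀ i ∈ Finset.Icc 1 (d-1), ∀ j ∈ Finset.Icc 1 (d-1), i ≠ j →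
      Disjoint (L i) (L j) := by
    intro i _ j _ hij
    simp only [Finset.disjoint_left, hL, Finset.mem_filter]
    rintro a ⟨-, ha⟩ ⟨-, hb⟩
    exact hij (ha ▸ hb)
  have hbig : (d - 1) * k ≤ ((Finset.Icc 1 (d-1)).biUnion L).card := by
    rw [Finset.card_biUnion hdisj]
    calc (d - 1) * k = ∑ i ∈ Finset.Icc 1 (d-1), k := by
          rw [Finset.sum_const, Nat.card_Icc, Nat.add_sub_cancel, smul_eq_mul]
      _ ≤ _ := Finset.sum_le_sum fun i hi => by
          rw [Finset.mem_Icc] at hi; exact hkey i hi.1 hi.2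
  have huB : u ∉ (Finset.Icc 1 (d-1)).biUnion L := by
    intro hmem
    simp only [Finset.mem_biUnion, Finset.mem_Icc, hL, Finset.mem_filter,
      Finset.mem_univ, true_and] at hmem
    obtain ⟨i, ⟨hi1, hi2⟩, hdist⟩ := hmem
    rw [G.dist_self] at hdist; omega
  have hvB : v ∉ (Finset.Icc 1 (d-1)).biUnion L := by
    intro hmem
    simp only [Finset.mem_biUnion, Finset.mem_Icc, hL, Finset.mem_filter,
      Finset.mem_univ, true_and] at hmem
    obtain ⟨i, ⟨hi1, hi2⟩, hdist⟩ := hmem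
    rw [← hd] at hdist; omega
  have hnuv : u ≠ v := by
    intro he; rw [he, G.dist_self] at hd; omega
  have hcount : (d - 1) * k + 2 ≤ Fintype.card V := by
    have := Finset.card_le_univ (insert u (insert v ((Finset.Icc 1 (d-1)).biUnion L)))
    rw [Finset.card_insert_of_notMem (by simp [hnuv, huB]),
        Finset.card_insert_of_notMem hvB] at this
    omega
  have : d - 1 ≤ (Fintype.card V - 2) / k :=
    Nat.le_div_iff_mul_le (by omega) |>.mpr (by omega)
  omega
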